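/- Let π^{μ,r} be a stationary point of RMD with mutation rate μ ∈ (0,1] and interior reference profile r. Then for any fully supported strategy profile π = (π₁, π₂) ∈ Δ°(A₁) × Δ°(A₂): Σ_{i=1}^{2} ( v_i^{π_i, π_{−i}^{μ,r}} + μ − μ Σ_{a∈A_i} r_i(a) · π_i^{μ,r}(a)/π_i(a) ) = −μ Σ_{i=1}^{2} Σ_{a∈A_i} r_i(a) ( √(π_i(a)/π_i^{μ,r}(a)) − √(π_i^{μ,r}(a)/π_i(a)) )². -/
import Mathlib


open Finset Real

noncomputable section

/-- `p` is a point of the probability simplex over `A`. -/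
def isSimplex {A : Type*} [Fintype A] (p : A → ℝ) : Prop :=
  (∀ a, 0 ≤ p a) ∧ ∑ a, p a = 1

/-- `p` is a point of the relative interior of the probability simplex over `A`. -/
def isInterior {A : Type*} [Fintype A] (p : A → ℝ) : Prop :=
  (∀ a, 0 < p a) ∧ ∑ a, p a = 1

/-- Player 1's expected utility in the zero-sum game with payoff `u`. -/
def v1 {A1 A2 : Type*} [Fintype A1] [Fintype A2] (u : A1 → A2 → ℝ)
    (x : A1 → ℝ) (y : A2 → ℝ) : ℝ :=
  ∑ a, ∑ b, x a * y b * u a b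

/-- Player 1's conditional expected utility of action `a` against `y`. -/
def q1 {A1 A2 : Type*} [Fintype A2] (u : A1 → A2 → ℝ) (y : A2 → ℝ) (a : A1) : ℝ :=
  ∑ b, y b * u a b

/-- Player 2's conditional expected utility of action `b` against `x` (utility `-u`). -/
def q2 {A1 A2 : Type*} [Fintype A1] (u : A1 → A2 → ℝ) (x : A1 → ℝ) (b : A2) : ℝ :=
  ∑ a, x a * (- u a b)

/-- Kullback–Leibler divergence. -/
def KL {A : Type*} [Fintype A] (p q : A → ℝ) : ℝ :=
  ∑ a, p a * Real.log (p a / q a)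

/-- Sum of KL divergences over the two players. -/
def KL2 {A1 A2 : Type*} [Fintype A1] [Fintype A2]
    (σ σ' : (A1 → ℝ) × (A2 → ℝ)) : ℝ :=
  KL σ.1 σ'.1 + KL σ.2 σ'.2

/-- `σ` is a stationary point of the replicator-mutator dynamics with mutation
rate `μ` and reference profile `r`. -/
def isStationary {A1 A2 : Type*} [Fintype A1] [Fintype A2] (u : A1 → A2 → ℝ) (μ : ℝ)
    (r σ : (A1 → ℝ) × (A2 → ℝ)) : Prop :=
  isSimplex σ.1 ∧ isSimplex σ.2 ∧
  (∀ a, σ.1 a * (q1 u σ.2 a - v1 u σ.1 σ.2) + μ * (r.1 a - σ.1 a) = 0) ∧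
  (∀ b, σ.2 b * (q2 u σ.1 b - (- v1 u σ.1 σ.2)) + μ * (r.2 b - σ.2 b) = 0)

/-- One multiplicative-weights step with learning rate `η` and gain vector `g`. -/
def mwuStep {A : Type*} [Fintype A] (η : ℝ) (g p : A → ℝ) : A → ℝ :=
  fun a => p a * Real.exp (η * g a) / ∑ a', p a' * Real.exp (η * g a')

/-- Player 1's mutation gradient. -/
def qmu1 {A1 A2 : Type*} [Fintype A2] (u : A1 → A2 → ℝ) (μ : ℝ) (r1 : A1 → ℝ)
    (x : A1 → ℝ) (y : A2 → ℝ) (a : A1) : ℝ :=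
  q1 u y a + μ / x a * (r1 a - x a)

/-- Player 2's mutation gradient. -/
def qmu2 {A1 A2 : Type*} [Fintype A1] (u : A1 → A2 → ℝ) (μ : ℝ) (r2 : A2 → ℝ)
    (x : A1 → ℝ) (y : A2 → ℝ) (b : A2) : ℝ :=
  q2 u x b + μ / y b * (r2 b - y b)

/-- `σ` is a trajectory of M2WU with full feedback, learning rates `η`. -/
def isM2WU {A1 A2 : Type*} [Fintype A1] [Fintype A2] (u : A1 → A2 → ℝ) (μ : ℝ)
    (r : (A1 → ℝ) × (A2 → ℝ)) (η : ℕ → ℝ) (σ : ℕ → (A1 → ℝ) × (A2 → ℝ)) : Prop :=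
  ∀ t, (σ (t+1)).1 = mwuStep (η t) (qmu1 u μ r.1 (σ t).1 (σ t).2) (σ t).1 ∧
       (σ (t+1)).2 = mwuStep (η t) (qmu2 u μ r.2 (σ t).1 (σ t).2) (σ t).2

/-- Exploitability of a strategy profile. -/
def explt {A1 A2 : Type*} [Fintype A1] [Fintype A2] (u : A1 → A2 → ℝ)
    (σ : (A1 → ℝ) × (A2 → ℝ)) : ℝ :=
  (⨆ x : {p : A1 → ℝ // isSimplex p}, v1 u x.1 σ.2) +
  (⨆ y : {p : A2 → ℝ // isSimplex p}, - v1 u σ.1 y.1)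

/-- Nash equilibrium of the two-player zero-sum game with payoff `u`. -/
def isNash {A1 A2 : Type*} [Fintype A1] [Fintype A2] (u : A1 → A2 → ℝ)
    (σ : (A1 → ℝ) × (A2 → ℝ)) : Prop :=
  isSimplex σ.1 ∧ isSimplex σ.2 ∧
  (∀ y, isSimplex y → v1 u σ.1 σ.2 ≤ v1 u σ.1 y) ∧
  (∀ x, isSimplex x → v1 u x σ.2 ≤ v1 u σ.1 σ.2)

/-- ℓ¹ norm of a finitely supported vector. -/
def l1norm {A : Type*} [Fintype A] (p : A → ℝ) : ℝ := ∑ a, |p a|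

/-- Euclidean distance between two profiles (concatenated coordinates). -/
def dist2 {A1 A2 : Type*} [Fintype A1] [Fintype A2]
    (σ σ' : (A1 → ℝ) × (A2 → ℝ)) : ℝ :=
  Real.sqrt ((∑ a, (σ.1 a - σ'.1 a) ^ 2) + (∑ b, (σ.2 b - σ'.2 b) ^ 2))
lemma sqrt_sub_sq_aux (x y : ℝ) (hx : 0 < x) (hy : 0 < y) :
    (Real.sqrt (x / y) - Real.sqrt (y / x)) ^ 2 = x / y + y / x - 2 := by
  have h1 : Real.sqrt (x / y) ^ 2 = x / y := Real.sq_sqrt (by positivity)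
  have h2 : Real.sqrt (y / x) ^ 2 = y / x := Real.sq_sqrt (by positivity)
  have h3 : Real.sqrt (x / y) * Real.sqrt (y / x) = 1 := by
    rw [← Real.sqrt_mul (by positivity), show x / y * (y / x) = 1 by field_simp,
      Real.sqrt_one]
  nlinarith [h1, h2, h3]

lemma v1_eq_sum_q1 {A1 A2 : Type*} [Fintype A1] [Fintype A2] (u : A1 → A2 → ℝ)
    (x : A1 → ℝ) (y : A2 → ℝ) : v1 u x y = ∑ a, x a * q1 u y a := by
  simp [v1, q1, Finset.mul_sum, mul_assoc]

lemma neg_v1_eq_sum_q2 {A1 A2 : Type*} [Fintype A1] [Fintype A2] (u : A1 → A2 → ℝ)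
    (x : A1 → ℝ) (y : A2 → ℝ) : - v1 u x y = ∑ b, y b * q2 u x b := by
  rw [v1, Finset.sum_comm, ← Finset.sum_neg_distrib]
  refine Finset.sum_congr rfl fun b _ => ?_
  rw [q2, Finset.mul_sum, ← Finset.sum_neg_distrib]
  exact Finset.sum_congr rfl fun a _ => by ring

/-- **Lemma 2 (quasi-metric form of the drift term).** -/
theorem rmd_divergence {A1 A2 : Type*} [Fintype A1] [Fintype A2]
    (u : A1 → A2 → ℝ)
    (μ : ℝ) (hμ : 0 < μ ∧ μ ≤ 1)
    (r : (A1 → ℝ) × (A2 → ℝ)) (hr1 : isInterior r.1) (hr2 : isInterior r.2)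
    (σst : (A1 → ℝ) × (A2 → ℝ)) (hst : isStationary u μ r σst)
    (hst1 : isInterior σst.1) (hst2 : isInterior σst.2)
    (σ : (A1 → ℝ) × (A2 → ℝ)) (hσ1 : isInterior σ.1) (hσ2 : isInterior σ.2) :
    ((v1 u σ.1 σst.2 + μ - μ * ∑ a, r.1 a * (σst.1 a / σ.1 a)) +
     ((- v1 u σst.1 σ.2) + μ - μ * ∑ b, r.2 b * (σst.2 b / σ.2 b))) =
    -μ * ((∑ a, r.1 a *
            (Real.sqrt (σ.1 a / σst.1 a) - Real.sqrt (σst.1 a / σ.1 a)) ^ 2) +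
          (∑ b, r.2 b *
            (Real.sqrt (σ.2 b / σst.2 b) - Real.sqrt (σst.2 b / σ.2 b)) ^ 2)) := by
  obtain ⟨hs1, hs2, hq1', hq2'⟩ := hst
  set v := v1 u σst.1 σst.2 with hv
  have hq1 : ∀ a, q1 u σst.2 a = v + μ - μ * (r.1 a / σst.1 a) := by
    intro a
    have h0 := hq1' a
    have hpos : σst.1 a ≠ 0 := (hst1.1 a).ne'
    field_simp
    linear_combination h0
  have hq2 : ∀ b, q2 u σst.1 b = -v + μ - μ * (r.2 b / σst.2 b) := by
    intro b
    have h0 := hq2' b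
    have hpos : σst.2 b ≠ 0 := (hst2.1 b).ne'
    field_simp
    linear_combination h0
  have e1 : v1 u σ.1 σst.2 = v + μ - μ * ∑ a, r.1 a * (σ.1 a / σst.1 a) := by
    rw [v1_eq_sum_q1]
    have : ∀ a ∈ Finset.univ, σ.1 a * q1 u σst.2 a
        = σ.1 a * (v + μ) - μ * (r.1 a * (σ.1 a / σst.1 a)) := by
      intro a _
      rw [hq1 a]
      ring
    rw [Finset.sum_congr rfl this, Finset.sum_sub_distrib, ← Finset.sum_mul,
      ← Finset.mul_sum, hσ1.2]
    ring
  have e2 : - v1 u σst.1 σ.2 = -v + μ - μ * ∑ b, r.2 b * (σ.2 b / σst.2 b) := by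
    rw [neg_v1_eq_sum_q2]
    have : ∀ b ∈ Finset.univ, σ.2 b * q2 u σst.1 b
        = σ.2 b * (-v + μ) - μ * (r.2 b * (σ.2 b / σst.2 b)) := by
      intro b _
      rw [hq2 b]
      ring
    rw [Finset.sum_congr rfl this, Finset.sum_sub_distrib, ← Finset.sum_mul,
      ← Finset.mul_sum, hσ2.2]
    ring
  have e3 : ∑ a, r.1 a * (Real.sqrt (σ.1 a / σst.1 a) - Real.sqrt (σst.1 a / σ.1 a)) ^ 2
      = (∑ a, r.1 a * (σ.1 a / σst.1 a)) + (∑ a, r.1 a * (σst.1 a / σ.1 a)) - 2 := by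
    have : ∀ a ∈ Finset.univ,
        r.1 a * (Real.sqrt (σ.1 a / σst.1 a) - Real.sqrt (σst.1 a / σ.1 a)) ^ 2
        = r.1 a * (σ.1 a / σst.1 a) + r.1 a * (σst.1 a / σ.1 a) - 2 * r.1 a := by
      intro a _
      rw [sqrt_sub_sq_aux _ _ (hσ1.1 a) (hst1.1 a)]
      ring
    rw [Finset.sum_congr rfl this, Finset.sum_sub_distrib, Finset.sum_add_distrib,
      ← Finset.mul_sum, hr1.2]
    ring
  have e4 : ∑ b, r.2 b * (Real.sqrt (σ.2 b / σst.2 b) - Real.sqrt (σst.2 b / σ.2 b)) ^ 2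
      = (∑ b, r.2 b * (σ.2 b / σst.2 b)) + (∑ b, r.2 b * (σst.2 b / σ.2 b)) - 2 := by
    have : ∀ b ∈ Finset.univ,
        r.2 b * (Real.sqrt (σ.2 b / σst.2 b) - Real.sqrt (σst.2 b / σ.2 b)) ^ 2
        = r.2 b * (σ.2 b / σst.2 b) + r.2 b * (σst.2 b / σ.2 b) - 2 * r.2 b := by
      intro b _
      rw [sqrt_sub_sq_aux _ _ (hσ2.1 b) (hst2.1 b)]
      ring
    rw [Finset.sum_congr rfl this, Finset.sum_sub_distrib, Finset.sum_add_distrib,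
      ← Finset.mul_sum, hr2.2]
    ring
  have e5 : ∑ a, r.1 a * (σst.1 a / σ.1 a) = ∑ a, r.1 a * (σst.1 a / σ.1 a) := rfl
  rw [e1, e2, e3, e4]
  ring
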